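/- Let G be a group, N a normal subgroup of G of finite index, and φ̃ a finite-dimensional complex representation of G whose restriction φ := φ̃|_N to N is irreducible. Then every finite-dimensional irreducible complex representation τ of G whose restriction to N contains φ (i.e., Hom_N(φ, τ|_N) ≠ 0) is isomorphic to ρ ⊗ φ̃ for some finite-dimensional irreducible complex representation ρ of G on which N acts trivially. -/

import Mathlib

open TensorProduct

/-- A representation is irreducible if the space is nonzero and the only invariant
subspaces are `⊥` and `⊤`. -/
def Representation.IsIrreducibleRep {k G V : Type*} [CommSemiring k] [Monoid G]
    [AddCommMonoid V] [Module k V] (ρ : Representation k G V) : Prop :=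
  (∃ v : V, v ≠ 0) ∧
    ∀ p : Submodule k V, (∀ g : G, ∀ x ∈ p, ρ g x ∈ p) → p = ⊥ ∨ p = ⊤

lemma aux_schur {G V : Type*} [Group G] [AddCommGroup V] [Module ℂ V] [FiniteDimensional ℂ V]
    (ρ : Representation ℂ G V) (hρ : ρ.IsIrreducibleRep)
    (T : V →ₗ[ℂ] V) (hT : ∀ g x, T (ρ g x) = ρ g (T x)) :
    ∃ c : ℂ, ∀ x, T x = c • x := by
  obtain ⟨⟨v, hv⟩, hsub⟩ := hρ
  have : Nontrivial V := ⟨v, 0, hv⟩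
  obtain ⟨μ, hμ⟩ := Module.End.exists_eigenvalue (T : Module.End ℂ V)
  refine ⟨μ, ?_⟩
  have hinv : ∀ g : G, ∀ x ∈ Module.End.eigenspace (T : Module.End ℂ V) μ,
      ρ g x ∈ Module.End.eigenspace (T : Module.End ℂ V) μ := by
    intro g x hx
    rw [Module.End.mem_eigenspace_iff] at hx ⊢
    show T (ρ g x) = μ • ρ g x
    rw [hT, hx, map_smul]
  rcases hsub _ hinv with h | h
  · exact absurd h (Module.End.hasEigenvalue_iff.mp hμ)
  · intro x
    have : x ∈ Module.End.eigenspace (T : Module.End ℂ V) μ := h ▸ Submodule.mem_top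
    rwa [Module.End.mem_eigenspace_iff] at this

lemma aux_inj {G V W : Type*} [Group G] [AddCommGroup V] [Module ℂ V] [FiniteDimensional ℂ V]
    [AddCommGroup W] [Module ℂ W] [FiniteDimensional ℂ W]
    (ρ : Representation ℂ G V) (hρ : ρ.IsIrreducibleRep)
    (σ : Representation ℂ G W) {k : ℕ} (f : Fin k → (V →ₗ[ℂ] W))
    (hf : LinearIndependent ℂ f)
    (hequiv : ∀ (i : Fin k) (g : G) (x : V), (f i) (ρ g x) = σ g (f i x))
    (v : Fin k → V) (hv : ∑ i, f i (v i) = 0) : ∀ i, v i = 0 := by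
  classical
  -- the evaluation map
  set L : (Fin k → V) →ₗ[ℂ] W := ∑ i, (f i).comp (LinearMap.proj i) with hL
  have hLapp : ∀ x : Fin k → V, L x = ∑ i, f i (x i) := by
    intro x; rw [hL]; simp [LinearMap.sum_apply]
  -- diagonal action
  set D : G → (Fin k → V) →ₗ[ℂ] (Fin k → V) :=
    fun g => LinearMap.pi (fun i => (ρ g).comp (LinearMap.proj i)) with hD
  have hDapp : ∀ g x i, D g x i = ρ g (x i) := by intro g x i; rfl
  have hXinv : ∀ g : G, ∀ x ∈ LinearMap.ker L, D g x ∈ LinearMap.ker L := by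
    intro g x hx
    rw [LinearMap.mem_ker] at hx ⊢
    rw [hLapp] at hx ⊢
    calc ∑ i, f i (D g x i) = ∑ i, σ g (f i (x i)) := by
          refine Finset.sum_congr rfl fun i _ => ?_
          rw [hDapp, hequiv]
        _ = σ g (∑ i, f i (x i)) := by rw [map_sum]
        _ = 0 := by rw [hx, map_zero]
  by_contra hcon
  push_neg at hcon
  obtain ⟨i₁, hi₁⟩ := hcon
  have hvX : v ∈ LinearMap.ker L := LinearMap.mem_ker.mpr (by rw [hLapp]; exact hv)
  have hXne : LinearMap.ker L ≠ ⊥ := by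
    intro h
    rw [h, Submodule.mem_bot] at hvX
    exact hi₁ (by rw [hvX]; rfl)
  -- minimal nonzero invariant submodule
  have hSne : ∃ d : ℕ, ∃ Y : Submodule ℂ (Fin k → V),
      Y ≤ LinearMap.ker L ∧ Y ≠ ⊥ ∧ (∀ g : G, ∀ x ∈ Y, D g x ∈ Y) ∧ Module.finrank ℂ Y = d :=
    ⟨_, LinearMap.ker L, le_rfl, hXne, hXinv, rfl⟩
  obtain ⟨Y, hYX, hYne, hYinv, hYrk⟩ := Nat.find_spec hSne
  have hmin : ∀ Z : Submodule ℂ (Fin k → V), Z ≤ LinearMap.ker L → Z ≠ ⊥ →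
      (∀ g : G, ∀ x ∈ Z, D g x ∈ Z) → Nat.find hSne ≤ Module.finrank ℂ Z := by
    intro Z h1 h2 h3
    exact Nat.find_min' hSne ⟨Z, h1, h2, h3, rfl⟩
  -- pick a coordinate where Y is nonzero
  obtain ⟨y₀, hy₀Y, hy₀⟩ := Submodule.exists_mem_ne_zero_of_ne_bot hYne
  obtain ⟨i₀, hi₀⟩ : ∃ i, y₀ i ≠ 0 := by
    by_contra h; push_neg at h; exact hy₀ (funext h)
  -- projection at i₀ is injective on Y
  have hZbot : Y ⊓ LinearMap.ker (LinearMap.proj i₀ : (Fin k → V) →ₗ[ℂ] V) = ⊥ := by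
    by_contra hZ
    have hZinv : ∀ g : G, ∀ x ∈ Y ⊓ LinearMap.ker (LinearMap.proj i₀ : (Fin k → V) →ₗ[ℂ] V),
        D g x ∈ Y ⊓ LinearMap.ker (LinearMap.proj i₀ : (Fin k → V) →ₗ[ℂ] V) := by
      intro g x hx
      obtain ⟨hx1, hx2⟩ := hx
      refine ⟨hYinv g x hx1, LinearMap.mem_ker.mpr ?_⟩
      show D g x i₀ = 0
      rw [hDapp]
      have hx2' : x i₀ = 0 := LinearMap.mem_ker.mp hx2
      rw [hx2', map_zero]
    have hle := hmin _ (le_trans inf_le_left hYX) hZ hZinv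
    have hlt : Y ⊓ LinearMap.ker (LinearMap.proj i₀ : (Fin k → V) →ₗ[ℂ] V) < Y := by
      refine lt_of_le_of_ne inf_le_left ?_
      intro h
      exact hi₀ ((h.ge hy₀Y).2)
    have := Submodule.finrank_lt_finrank_of_lt hlt
    omega
  -- projection at i₀ is surjective from Y
  have hproj_surj : Y.map (LinearMap.proj i₀ : (Fin k → V) →ₗ[ℂ] V) = ⊤ := by
    have hinv' : ∀ g : G, ∀ x ∈ Y.map (LinearMap.proj i₀ : (Fin k → V) →ₗ[ℂ] V),
        ρ g x ∈ Y.map (LinearMap.proj i₀ : (Fin k → V) →ₗ[ℂ] V) := by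
      rintro g x ⟨y, hy, rfl⟩
      exact ⟨D g y, hYinv g y hy, (hDapp g y i₀).symm⟩
    rcases hρ.2 (Y.map (LinearMap.proj i₀)) hinv' with h | h
    · exfalso
      have : y₀ i₀ ∈ Y.map (LinearMap.proj i₀ : (Fin k → V) →ₗ[ℂ] V) :=
        ⟨y₀, hy₀Y, rfl⟩
      rw [h, Submodule.mem_bot] at this
      exact hi₀ this
    · exact h
  -- the bijective projection
  set π : Y →ₗ[ℂ] V := (LinearMap.proj i₀ : (Fin k → V) →ₗ[ℂ] V).comp Y.subtype with hπ
  have hπinj : Function.Injective π := by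
    intro a b hab
    have hmem : (a : Fin k → V) - b ∈
        Y ⊓ LinearMap.ker (LinearMap.proj i₀ : (Fin k → V) →ₗ[ℂ] V) := by
      refine ⟨Y.sub_mem a.2 b.2, LinearMap.mem_ker.mpr ?_⟩
      show (a : Fin k → V) i₀ - (b : Fin k → V) i₀ = 0
      have : (a : Fin k → V) i₀ = (b : Fin k → V) i₀ := hab
      rw [this, sub_self]
    rw [hZbot, Submodule.mem_bot, sub_eq_zero] at hmem
    exact Subtype.ext hmem
  have hπsurj : Function.Surjective π := by
    intro x
    have hx : x ∈ Y.map (LinearMap.proj i₀ : (Fin k → V) →ₗ[ℂ] V) := hproj_surj ▸ Submodule.mem_top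
    obtain ⟨y, hy, hyx⟩ := hx
    exact ⟨⟨y, hy⟩, hyx⟩
  set e : Y ≃ₗ[ℂ] V := LinearEquiv.ofBijective π ⟨hπinj, hπsurj⟩ with he
  have heapp : ∀ y : Y, e y = (y : Fin k → V) i₀ := fun y => rfl
  -- e.symm intertwines
  have hesymm : ∀ (g : G) (x : V),
      ((e.symm (ρ g x) : Y) : Fin k → V) = D g ((e.symm x : Y) : Fin k → V) := by
    intro g x
    have hmem : D g ((e.symm x : Y) : Fin k → V) ∈ Y := hYinv g _ (e.symm x).2
    have key : e ⟨D g ((e.symm x : Y) : Fin k → V), hmem⟩ = ρ g x := by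
      rw [heapp]
      show D g ((e.symm x : Y) : Fin k → V) i₀ = ρ g x
      rw [hDapp]
      congr 1
      have h1 := heapp (e.symm x)
      rw [e.apply_symm_apply] at h1
      exact h1.symm
    have h2 := congrArg e.symm key
    rw [e.symm_apply_apply] at h2
    rw [← h2]
  -- the scalar maps
  have hT : ∀ i : Fin k, ∃ c : ℂ, ∀ x : V, ((e.symm x : Y) : Fin k → V) i = c • x := by
    intro i
    set T : V →ₗ[ℂ] V :=
      (LinearMap.proj i : (Fin k → V) →ₗ[ℂ] V).comp (Y.subtype.comp e.symm.toLinearMap) with hTdef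
    have hTapp : ∀ x, T x = ((e.symm x : Y) : Fin k → V) i := fun x => rfl
    have hcomm : ∀ (g : G) (x : V), T (ρ g x) = ρ g (T x) := by
      intro g x
      rw [hTapp, hTapp, hesymm, hDapp]
    obtain ⟨c, hc⟩ := aux_schur ρ hρ T hcomm
    exact ⟨c, fun x => by rw [← hTapp, hc]⟩
  choose lam hlam using hT
  -- the lambdas vanish
  have hlam0 : ∀ i, lam i = 0 := by
    have hsum : ∑ i, lam i • f i = 0 := by
      apply LinearMap.ext
      intro x
      have hmem : ((e.symm x : Y) : Fin k → V) ∈ LinearMap.ker L := hYX (e.symm x).2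
      rw [LinearMap.mem_ker, hLapp] at hmem
      calc (∑ i, lam i • f i) x = ∑ i, f i (((e.symm x : Y) : Fin k → V) i) := by
            rw [LinearMap.sum_apply]
            refine Finset.sum_congr rfl fun i _ => ?_
            rw [hlam i x, LinearMap.smul_apply, map_smul]
          _ = 0 := hmem
    have := Fintype.linearIndependent_iff.mp hf lam ?_
    · exact this
    · exact hsum
  -- contradiction: Y = ⊥
  have : y₀ i₀ = 0 := by
    have h1 : (⟨y₀, hy₀Y⟩ : Y) = e.symm (e ⟨y₀, hy₀Y⟩) := (e.symm_apply_apply _).symm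
    have h2 : y₀ i₀ = ((e.symm (e ⟨y₀, hy₀Y⟩) : Y) : Fin k → V) i₀ := by rw [← h1]
    rw [h2, hlam i₀ (e ⟨y₀, hy₀Y⟩), hlam0 i₀, zero_smul]
  exact hi₀ this

set_option maxHeartbeats 2000000 in
set_option synthInstance.maxHeartbeats 400000 in
/-- Let `N` be a normal subgroup of finite index in `G` and `φ̃` a
finite-dimensional complex representation of `G` whose restriction `φ` to `N` is irreducible.
Then every finite-dimensional irreducible complex representation `τ` of `G` whose restriction
to `N` contains `φ` is isomorphic to `ρ ⊗ φ̃` for some finite-dimensional irreducible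
representation `ρ` of `G` on which `N` acts trivially. -/
theorem irreducible_extension_eq_twist {G : Type*} [Group G]
    (N : Subgroup G) [N.Normal] [N.FiniteIndex]
    {V : Type*} [AddCommGroup V] [Module ℂ V] [FiniteDimensional ℂ V]
    (φext : Representation ℂ G V)
    (hφ : Representation.IsIrreducibleRep (MonoidHom.comp φext N.subtype))
    {W : Type*} [AddCommGroup W] [Module ℂ W] [FiniteDimensional ℂ W]
    (τ : Representation ℂ G W) (hτ : Representation.IsIrreducibleRep τ)
    (hHom : ∃ f : V →ₗ[ℂ] W, f ≠ 0 ∧ ∀ (n : ↥N) (x : V), f (φext ↑n x) = τ ↑n (f x)) :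
    ∃ (n : ℕ) (ρ : Representation ℂ G (Fin n → ℂ)),
      Representation.IsIrreducibleRep ρ ∧ (∀ m : ↥N, ρ ↑m = 1) ∧
        ∃ e : W ≃ₗ[ℂ] ((Fin n → ℂ) ⊗[ℂ] V),
          ∀ (g : G) (x : W), e (τ g x) = (ρ.tprod φext) g (e x) := by
  classical
  obtain ⟨f₀, hf₀ne, hf₀eq⟩ := hHom
  -- multiplication helpers
  have keyφ : ∀ (a b : G) (y : V), φext a (φext b y) = φext (a * b) y := by
    intro a b y; rw [map_mul]; rfl
  have keyτ : ∀ (a b : G) (y : W), τ a (τ b y) = τ (a * b) y := by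
    intro a b y; rw [map_mul]; rfl
  -- the submodule of N-equivariant maps
  let U : Submodule ℂ (V →ₗ[ℂ] W) :=
    { carrier := {f | ∀ (n : ↥N) (x : V), f (φext ↑n x) = τ ↑n (f x)}
      add_mem' := by intro a b ha hb n x; simp [ha n x, hb n x]
      zero_mem' := by intro n x; simp
      smul_mem' := by intro c a ha n x; simp [ha n x] }
  have hf₀U : f₀ ∈ U := hf₀eq
  -- the conjugation action on Hom(V, W)
  let B : G → (V →ₗ[ℂ] W) →ₗ[ℂ] (V →ₗ[ℂ] W) := fun g =>
    { toFun := fun f => (τ g) ∘ₗ f ∘ₗ (φext g⁻¹)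
      map_add' := by intro a b; ext x; simp
      map_smul' := by intro c a; ext x; simp }
  have hBapp : ∀ (g : G) (f : V →ₗ[ℂ] W) (x : V), B g f x = τ g (f (φext g⁻¹ x)) :=
    fun g f x => rfl
  have hBmem : ∀ g : G, ∀ f ∈ U, B g f ∈ U := by
    intro g f hfU n x
    have hn' : g⁻¹ * ↑n * g ∈ N := by
      have := (inferInstance : N.Normal).conj_mem ↑n n.2 g⁻¹
      rwa [inv_inv] at this
    set m : ↥N := ⟨g⁻¹ * ↑n * g, hn'⟩ with hm
    calc B g f (φext ↑n x) = τ g (f (φext g⁻¹ (φext ↑n x))) := hBapp ..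
      _ = τ g (f (φext (↑m * g⁻¹) x)) := by
          rw [keyφ]
          have h : (g⁻¹ * ↑n : G) = (↑m : G) * g⁻¹ := by
            rw [hm]
            show (g⁻¹ * ↑n : G) = (g⁻¹ * ↑n * g) * g⁻¹
            rw [mul_inv_cancel_right]
          rw [h]
      _ = τ g (f (φext ↑m (φext g⁻¹ x))) := by rw [← keyφ]
      _ = τ g (τ ↑m (f (φext g⁻¹ x))) := by rw [hfU m]
      _ = τ (↑n * g) (f (φext g⁻¹ x)) := by
          rw [keyτ]
          have h : (g * ↑m : G) = (↑n : G) * g := by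
            rw [hm]
            show (g * (g⁻¹ * ↑n * g) : G) = ↑n * g
            group
          rw [h]
      _ = τ ↑n (B g f x) := by rw [← keyτ, hBapp]
  let A : G → (↥U →ₗ[ℂ] ↥U) := fun g => (B g).restrict (hBmem g)
  have hAapp : ∀ (g : G) (u : ↥U), ((A g u : ↥U) : V →ₗ[ℂ] W) = B g ↑u :=
    fun g u => rfl
  have hA1 : A 1 = LinearMap.id := by
    apply LinearMap.ext; intro u
    apply Subtype.ext
    rw [hAapp]
    ext x
    rw [hBapp]
    simp
  have hAmul : ∀ g h : G, A (g * h) = (A g) ∘ₗ (A h) := by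
    intro g h
    apply LinearMap.ext; intro u
    apply Subtype.ext
    rw [LinearMap.comp_apply, hAapp, hAapp, hAapp]
    ext x
    rw [hBapp, hBapp, hBapp, keyτ, keyφ]
    congr 2
    rw [mul_inv_rev]
  -- transport to Fin k → ℂ via a basis
  have : Nontrivial ↥U := ⟨⟨f₀, hf₀U⟩, 0, by
    intro h
    exact hf₀ne (congrArg Subtype.val h)⟩
  set k := Module.finrank ℂ ↥U with hk
  let b : Module.Basis (Fin k) ℂ ↥U := Module.finBasis ℂ ↥U
  let β : (Fin k → ℂ) ≃ₗ[ℂ] ↥U := b.equivFun.symm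
  have hkpos : 0 < k := hk ▸ Module.finrank_pos
  let ρ : Representation ℂ G (Fin k → ℂ) :=
    { toFun := fun g => β.symm.toLinearMap ∘ₗ (A g) ∘ₗ β.toLinearMap
      map_one' := by
        apply LinearMap.ext; intro c
        show β.symm (A 1 (β c)) = c
        rw [hA1]
        show β.symm (β c) = c
        rw [β.symm_apply_apply]
      map_mul' := by
        intro g h
        apply LinearMap.ext; intro c
        show β.symm (A (g * h) (β c)) = β.symm (A g (β (β.symm (A h (β c)))))
        rw [hAmul, β.apply_symm_apply]
        rfl }
  have hρapp : ∀ (g : G) (c : Fin k → ℂ), ρ g c = β.symm (A g (β c)) := fun g c => rfl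
  -- evaluation map
  let ev : ((Fin k → ℂ) ⊗[ℂ] V) →ₗ[ℂ] W := TensorProduct.lift (U.subtype.comp β.toLinearMap)
  have hevtmul : ∀ (c : Fin k → ℂ) (v : V), ev (c ⊗ₜ[ℂ] v) = ((β c : ↥U) : V →ₗ[ℂ] W) v :=
    fun c v => rfl
  -- equivariance of ev
  have hev : ∀ (g : G) (t : (Fin k → ℂ) ⊗[ℂ] V), ev ((ρ.tprod φext) g t) = τ g (ev t) := by
    intro g t
    induction t using TensorProduct.induction_on with
    | zero => simp
    | tmul c v =>
        rw [Representation.tprod_apply, TensorProduct.map_tmul, hevtmul, hevtmul, hρapp,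
          β.apply_symm_apply, hAapp, hBapp, keyφ, inv_mul_cancel, map_one]
        rfl
    | add t1 t2 h1 h2 => simp only [map_add, h1, h2]
  -- injectivity of ev
  have hbind : LinearIndependent ℂ (fun i : Fin k => ((b i : ↥U) : V →ₗ[ℂ] W)) :=
    b.linearIndependent.map' U.subtype U.ker_subtype
  have hbequiv : ∀ (i : Fin k) (n : ↥N) (x : V),
      ((b i : ↥U) : V →ₗ[ℂ] W) ((MonoidHom.comp φext N.subtype) n x) =
        (MonoidHom.comp τ N.subtype) n (((b i : ↥U) : V →ₗ[ℂ] W) x) :=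
    fun i n x => (b i).2 n x
  -- the coordinate map
  let χ : ((Fin k → ℂ) ⊗[ℂ] V) →ₗ[ℂ] (Fin k → V) :=
    TensorProduct.lift (LinearMap.mk₂ ℂ (fun (c : Fin k → ℂ) (v : V) => fun i => c i • v)
      (by intro c c' v; funext i; simp [add_smul])
      (by intro a c v; funext i; simp [smul_smul])
      (by intro c v v'; funext i; simp [smul_add])
      (by intro a c v; funext i; simp [smul_comm a (c i) v]))
  have hχtmul : ∀ (c : Fin k → ℂ) (v : V) (i : Fin k), χ (c ⊗ₜ[ℂ] v) i = c i • v :=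
    fun c v i => rfl
  -- decomposition of tensors
  have hdecomp : ∀ t : (Fin k → ℂ) ⊗[ℂ] V, t = ∑ i, (Pi.single i (1 : ℂ)) ⊗ₜ[ℂ] (χ t i) := by
    intro t
    induction t using TensorProduct.induction_on with
    | zero => simp
    | tmul c v =>
        have h1 : ∀ i : Fin k,
            (Pi.single i (1 : ℂ)) ⊗ₜ[ℂ] (χ (c ⊗ₜ[ℂ] v) i) = (Pi.single i (c i) : Fin k → ℂ) ⊗ₜ[ℂ] v := by
          intro i
          have hs : (Pi.single i (c i) : Fin k → ℂ) = c i • (Pi.single i (1 : ℂ) : Fin k → ℂ) := by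
            funext j
            by_cases hij : j = i
            · subst hij; simp
            · simp [Pi.single_eq_of_ne hij]
          rw [hχtmul, hs, TensorProduct.smul_tmul]
        rw [Finset.sum_congr rfl (fun i _ => h1 i), ← TensorProduct.sum_tmul,
          Finset.univ_sum_single]
    | add t1 t2 ih1 ih2 =>
        conv_lhs => rw [ih1, ih2]
        rw [← Finset.sum_add_distrib]
        refine Finset.sum_congr rfl fun i _ => ?_
        rw [map_add]
        show _ = (Pi.single i (1:ℂ) : Fin k → ℂ) ⊗ₜ[ℂ] (χ t1 i + χ t2 i)
        rw [TensorProduct.tmul_add]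
  -- β applied to a standard basis vector
  have hβsingle : ∀ i : Fin k, β (Pi.single i (1 : ℂ)) = b i := by
    intro i
    show b.equivFun.symm (Pi.single i (1 : ℂ)) = b i
    rw [Module.Basis.equivFun_symm_apply]
    rw [Finset.sum_eq_single i]
    · simp
    · intro j _ hji; rw [Pi.single_eq_of_ne hji, zero_smul]
    · intro h; exact absurd (Finset.mem_univ i) h
  -- injectivity of ev
  have hker : ∀ t, ev t = 0 → t = 0 := by
    intro t ht
    have hsum : ∑ i, ((b i : ↥U) : V →ₗ[ℂ] W) (χ t i) = 0 := by
      have h2 := congrArg ev (hdecomp t)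
      rw [ht, map_sum] at h2
      have h3 : ∀ i : Fin k, ev ((Pi.single i (1 : ℂ)) ⊗ₜ[ℂ] (χ t i)) =
          ((b i : ↥U) : V →ₗ[ℂ] W) (χ t i) := by
        intro i; rw [hevtmul, hβsingle]
      rw [Finset.sum_congr rfl (fun i _ => h3 i)] at h2
      exact h2.symm
    have hzero := aux_inj (MonoidHom.comp φext N.subtype) hφ (MonoidHom.comp τ N.subtype)
      _ hbind hbequiv (fun i => χ t i) hsum
    rw [hdecomp t]
    refine Finset.sum_eq_zero fun i _ => ?_
    have hzi : χ t i = 0 := hzero i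
    rw [hzi, TensorProduct.tmul_zero]
  have hinj : Function.Injective ev := by
    intro a c hac
    have h0 : ev (a - c) = 0 := by rw [map_sub, hac, sub_self]
    exact sub_eq_zero.mp (hker _ h0)
  -- surjectivity of ev
  have hrange : ∀ g : G, ∀ w ∈ LinearMap.range ev, τ g w ∈ LinearMap.range ev := by
    rintro g w ⟨t, rfl⟩
    exact ⟨(ρ.tprod φext) g t, hev g t⟩
  have hsurj : Function.Surjective ev := by
    rcases hτ.2 (LinearMap.range ev) hrange with h | h
    · exfalso
      obtain ⟨x, hx⟩ : ∃ x, f₀ x ≠ 0 := by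
        by_contra hc; push_neg at hc; exact hf₀ne (LinearMap.ext hc)
      have hm : f₀ x ∈ LinearMap.range ev :=
        ⟨(β.symm ⟨f₀, hf₀U⟩) ⊗ₜ[ℂ] x, by rw [hevtmul, β.apply_symm_apply]⟩
      rw [h, Submodule.mem_bot] at hm
      exact hx hm
    · exact fun w => LinearMap.range_eq_top.mp h w
  let eqv : ((Fin k → ℂ) ⊗[ℂ] V) ≃ₗ[ℂ] W := LinearEquiv.ofBijective ev ⟨hinj, hsurj⟩
  have heqv : ∀ t, eqv t = ev t := fun t => rfl
  -- N acts trivially on ρ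
  have hNtriv : ∀ m : ↥N, ρ ↑m = 1 := by
    intro n
    apply LinearMap.ext; intro c
    show β.symm (A ↑n (β c)) = c
    have hfix : A ↑n (β c) = β c := by
      apply Subtype.ext
      rw [hAapp]
      ext x
      rw [hBapp]
      have hprop := (β c).2 n⁻¹ x
      have hcoe : ((n⁻¹ : ↥N) : G) = (↑n : G)⁻¹ := rfl
      rw [hcoe] at hprop
      rw [hprop, keyτ, mul_inv_cancel, map_one]
      rfl
    rw [hfix, β.symm_apply_apply]
  -- irreducibility of ρ
  have hρirr : ρ.IsIrreducibleRep := by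
    constructor
    · refine ⟨Pi.single ⟨0, hkpos⟩ (1 : ℂ), ?_⟩
      intro h
      have h0 := congrFun h ⟨0, hkpos⟩
      simp at h0
    · intro p hp
      by_cases hbot : p = ⊥
      · exact Or.inl hbot
      right
      -- the inclusion of p ⊗ V
      let Φ : (↥p ⊗[ℂ] V) →ₗ[ℂ] ((Fin k → ℂ) ⊗[ℂ] V) :=
        TensorProduct.map p.subtype LinearMap.id
      have hstep : ∀ (g : G) (t : ↥p ⊗[ℂ] V), ∃ t', Φ t' = (ρ.tprod φext) g (Φ t) := by
        intro g t
        induction t using TensorProduct.induction_on with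
        | zero => exact ⟨0, by simp⟩
        | tmul c v =>
            refine ⟨(⟨ρ g ↑c, hp g ↑c c.2⟩ : ↥p) ⊗ₜ[ℂ] (φext g v), ?_⟩
            rw [Representation.tprod_apply]
            show Φ _ = TensorProduct.map (ρ g) (φext g) (Φ (c ⊗ₜ[ℂ] v))
            rw [show Φ (c ⊗ₜ[ℂ] v) = (↑c : Fin k → ℂ) ⊗ₜ[ℂ] v from rfl,
              TensorProduct.map_tmul]
            rfl
        | add t1 t2 ih1 ih2 =>
            obtain ⟨s1, hs1⟩ := ih1
            obtain ⟨s2, hs2⟩ := ih2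
            exact ⟨s1 + s2, by rw [map_add, hs1, hs2, map_add, map_add]⟩
      have hqinv : ∀ g : G, ∀ w ∈ LinearMap.range (ev ∘ₗ Φ),
          τ g w ∈ LinearMap.range (ev ∘ₗ Φ) := by
        rintro g w ⟨t, rfl⟩
        obtain ⟨t', ht'⟩ := hstep g t
        refine ⟨t', ?_⟩
        rw [LinearMap.comp_apply, LinearMap.comp_apply, ht', hev]
      have hqtop : LinearMap.range (ev ∘ₗ Φ) = ⊤ := by
        rcases hτ.2 _ hqinv with h | h
        · exfalso
          obtain ⟨c, hcp, hcne⟩ := Submodule.exists_mem_ne_zero_of_ne_bot hbot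
          have hβc : ((β c : ↥U) : V →ₗ[ℂ] W) ≠ 0 := by
            intro h0
            apply hcne
            have h1 : β c = 0 := Subtype.ext h0
            have h2 := congrArg β.symm h1
            rwa [β.symm_apply_apply, map_zero] at h2
          obtain ⟨x, hx⟩ : ∃ x, ((β c : ↥U) : V →ₗ[ℂ] W) x ≠ 0 := by
            by_contra hc2; push_neg at hc2; exact hβc (LinearMap.ext hc2)
          have hmem : ((β c : ↥U) : V →ₗ[ℂ] W) x ∈ LinearMap.range (ev ∘ₗ Φ) := by
            refine ⟨(⟨c, hcp⟩ : ↥p) ⊗ₜ[ℂ] x, ?_⟩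
            rw [LinearMap.comp_apply,
              show Φ ((⟨c, hcp⟩ : ↥p) ⊗ₜ[ℂ] x) = c ⊗ₜ[ℂ] x from rfl, hevtmul]
          rw [h, Submodule.mem_bot] at hmem
          exact hx hmem
        · exact h
      -- Φ is surjective
      have hΦsurj : Function.Surjective Φ := by
        intro t
        have ht : ev t ∈ LinearMap.range (ev ∘ₗ Φ) := hqtop ▸ Submodule.mem_top
        obtain ⟨s, hs⟩ := ht
        exact ⟨s, hinj hs⟩
      -- finrank comparison
      have hr1 : Module.finrank ℂ ((Fin k → ℂ) ⊗[ℂ] V) ≤ Module.finrank ℂ (↥p ⊗[ℂ] V) := by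
        haveI : Module.Finite ℂ (↥p ⊗[ℂ] V) := Module.Finite.tensorProduct ℂ _ _
        have h1 := LinearMap.finrank_range_le (R := ℂ) (M := ↥p ⊗[ℂ] V)
          (M' := (Fin k → ℂ) ⊗[ℂ] V) Φ
        rwa [LinearMap.range_eq_top.mpr hΦsurj, finrank_top] at h1
      rw [Module.finrank_tensorProduct, Module.finrank_tensorProduct,
        Module.finrank_fin_fun] at hr1
      have hVpos : 0 < Module.finrank ℂ V := by
        obtain ⟨v, hv⟩ := hφ.1
        have : Nontrivial V := ⟨v, 0, hv⟩
        exact Module.finrank_pos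
      have hkle : k ≤ Module.finrank ℂ ↥p := Nat.le_of_mul_le_mul_right hr1 hVpos
      have hple : Module.finrank ℂ ↥p ≤ k := by
        have h2 := Submodule.finrank_le p
        rwa [Module.finrank_fin_fun] at h2
      exact Submodule.eq_top_of_finrank_eq (by rw [Module.finrank_fin_fun]; omega)
  refine ⟨k, ρ, hρirr, hNtriv, eqv.symm, ?_⟩
  intro g x
  have hx : x = ev (eqv.symm x) := by
    have h1 := eqv.apply_symm_apply x
    rw [heqv] at h1
    exact h1.symm
  conv_lhs => rw [hx]
  rw [← hev, ← heqv, eqv.symm_apply_apply]
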